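/- Let f: ℝ₊ → ℝ be continuously differentiable and suppose there exists K ≥ 0 such that |f(y) − y·f'(y)| ≤ K for all y ≥ 0. Then for all a, b, t > 0 with a ≠ b, one has |(b·f(a·t) − a·f(b·t))/(b − a)| ≤ K. -/

import Mathlib

open MeasureTheory intervalIntegral

lemma key_lemma (f : ℝ → ℝ) (hf : ContDiff ℝ 1 f) (K : ℝ) (hK0 : 0 ≤ K)
    (hK : ∀ y : ℝ, 0 ≤ y → |f y - y * deriv f y| ≤ K)
    (a b t : ℝ) (ha : 0 < a) (ht : 0 < t) (hab : a < b) :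
    |(b * f (a * t) - a * f (b * t)) / (b - a)| ≤ K := by
  have hb : 0 < b := ha.trans hab
  have hd : ∀ y : ℝ, HasDerivAt f (deriv f y) y :=
    fun y => (hf.differentiable one_ne_zero y).hasDerivAt
  have hcd : Continuous (deriv f) := hf.continuous_deriv le_rfl
  set h : ℝ → ℝ := fun y => f y - y * deriv f y with hh
  have hch : Continuous h := hf.continuous.sub (continuous_id.mul hcd)
  have hg : ∀ x ∈ Set.uIcc a b, HasDerivAt (fun x => f (x * t) / x)
      (-(h (x * t)) / x ^ 2) x := by
    intro x hx
    rw [Set.uIcc_of_le hab.le] at hx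
    have hx0 : x ≠ 0 := (ha.trans_le hx.1).ne'
    have h1 : HasDerivAt (fun x : ℝ => f (x * t)) (deriv f (x * t) * t) x := by
      simpa [Function.comp_def] using (hd (x * t)).comp x ((hasDerivAt_id x).mul_const t)
    have h2 : HasDerivAt (fun x : ℝ => f (x * t) / x)
        ((deriv f (x*t) * t * x - f (x*t) * 1) / x ^ 2) x :=
      h1.div (hasDerivAt_id x) hx0
    convert h2 using 1
    field_simp [hh]
    ring
  have hcont : ContinuousOn (fun x : ℝ => -(h (x * t)) / x ^ 2) (Set.uIcc a b) := by
    rw [Set.uIcc_of_le hab.le]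
    apply ContinuousOn.div
    · exact ((hch.comp (continuous_id.mul continuous_const)).neg).continuousOn
    · exact (continuous_pow 2).continuousOn
    · intro x hx; exact pow_ne_zero 2 (ha.trans_le hx.1).ne'
  have hint : IntervalIntegrable (fun x : ℝ => -(h (x * t)) / x ^ 2) volume a b :=
    hcont.intervalIntegrable
  have ftc : ∫ x in a..b, -(h (x * t)) / x ^ 2 = f (b * t) / b - f (a * t) / a :=
    integral_eq_sub_of_hasDerivAt hg hint
  -- integral of K / x^2
  have hK2 : ∀ x ∈ Set.uIcc a b, HasDerivAt (fun x : ℝ => -(K * x⁻¹)) (K / x ^ 2) x := by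
    intro x hx
    rw [Set.uIcc_of_le hab.le] at hx
    have hx0 : x ≠ 0 := (ha.trans_le hx.1).ne'
    have := ((hasDerivAt_inv hx0).const_mul K).neg
    rw [show K / x ^ 2 = -(K * -(x ^ 2)⁻¹) by ring]
    exact this
  have hcont2 : ContinuousOn (fun x : ℝ => K / x ^ 2) (Set.uIcc a b) := by
    rw [Set.uIcc_of_le hab.le]
    apply ContinuousOn.div continuousOn_const (continuous_pow 2).continuousOn
    intro x hx; exact pow_ne_zero 2 (ha.trans_le hx.1).ne'
  have hint2 : IntervalIntegrable (fun x : ℝ => K / x ^ 2) volume a b :=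
    hcont2.intervalIntegrable
  have ftc2 : ∫ x in a..b, K / x ^ 2 = K * a⁻¹ - K * b⁻¹ := by
    have := integral_eq_sub_of_hasDerivAt hK2 hint2
    rw [this]; ring
  -- bound the integral
  have habs : |∫ x in a..b, -(h (x * t)) / x ^ 2| ≤ K * a⁻¹ - K * b⁻¹ := by
    rw [← ftc2]
    calc |∫ x in a..b, -(h (x * t)) / x ^ 2|
        ≤ ∫ x in a..b, |(-(h (x * t)) / x ^ 2)| :=
          intervalIntegral.abs_integral_le_integral_abs hab.le
      _ ≤ ∫ x in a..b, K / x ^ 2 := by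
          apply intervalIntegral.integral_mono_on hab.le _ hint2
          · intro x hx
            have hx0 : 0 < x := ha.trans_le hx.1
            have hxt : 0 ≤ x * t := by positivity
            rw [abs_div, abs_neg, abs_of_nonneg (by positivity : (0:ℝ) ≤ x ^ 2)]
            apply div_le_div_of_nonneg_right _ (by positivity)
            exact hK (x * t) hxt
          · exact hint.abs
  -- conclude
  have hba : 0 < b - a := sub_pos.mpr hab
  have key : (b * f (a * t) - a * f (b * t)) / (b - a)
      = -(a * b / (b - a)) * ∫ x in a..b, -(h (x * t)) / x ^ 2 := by
    rw [ftc]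
    field_simp
    ring
  rw [key, abs_mul, abs_neg, abs_of_nonneg (by positivity : (0:ℝ) ≤ a * b / (b - a))]
  calc a * b / (b - a) * |∫ x in a..b, -(h (x * t)) / x ^ 2|
      ≤ a * b / (b - a) * (K * a⁻¹ - K * b⁻¹) := by
        apply mul_le_mul_of_nonneg_left habs (by positivity)
    _ = K := by field_simp

theorem stmt_1 (f : ℝ → ℝ) (hf : ContDiff ℝ 1 f) (K : ℝ) (hK0 : 0 ≤ K)
    (hK : ∀ y : ℝ, 0 ≤ y → |f y - y * deriv f y| ≤ K)
    (a b t : ℝ) (ha : 0 < a) (hb : 0 < b) (ht : 0 < t) (hab : a ≠ b) :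
    |(b * f (a * t) - a * f (b * t)) / (b - a)| ≤ K := by
  rcases hab.lt_or_gt with h | h
  · exact key_lemma f hf K hK0 hK a b t ha ht h
  · have := key_lemma f hf K hK0 hK b a t hb ht h
    have heq : (b * f (a * t) - a * f (b * t)) / (b - a)
        = (a * f (b * t) - b * f (a * t)) / (a - b) := by
      rw [← neg_div_neg_eq]; ring_nf
    rw [heq]; exact this
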